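/- There exists a formula ψ(x, y) in the first-order language L(S1, S2) (the language of ordered rings extended with two unary relation symbols S1 and S2) such that for every pair of disjoint finite sets S1, S2 ⊆ ℝ there is a continuous piecewise linear function f : ℝ → ℝ with the following two properties: (i) for all a, b ∈ ℝ, ψ(a, b) holds in the structure (ℝ; 0, 1, +, ·, <, S1, S2) if and only if f(a) = b; and (ii) ∫₀¹ f(x) dx = 0 if and only if |S1| = |S2|. -/

import Mathlib

open FirstOrder

/-- A closed convex polyhedron in ℝ: a finite intersection of closed half-spaces. -/
def IsPolyhedron1 (P : Set ℝ) : Prop :=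
  ∃ s : Finset (ℝ × ℝ), P = {x : ℝ | ∀ p ∈ s, 0 ≤ p.1 * x + p.2}

/-- A continuous piecewise linear function ℝ → ℝ (the class PL(1)). -/
def IsPWL1 (f : ℝ → ℝ) : Prop :=
  Continuous f ∧
    ∃ Ps : Finset (Set ℝ),
      (∀ P ∈ Ps, IsPolyhedron1 P) ∧
      (⋃ P ∈ Ps, P) = Set.univ ∧
      ∀ P ∈ Ps, ∃ a b : ℝ, ∀ x ∈ P, f x = a * x + b

/-- Function symbols of the language L(S1, S2): 0, 1, +, ·. -/
inductive LSFunc : ℕ → Type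
  | zero : LSFunc 0
  | one : LSFunc 0
  | add : LSFunc 2
  | mul : LSFunc 2

/-- Relation symbols of L(S1, S2): <, S1, S2. -/
inductive LSRel : ℕ → Type
  | lt : LSRel 2
  | S1 : LSRel 1
  | S2 : LSRel 1

/-- The language L(S1, S2): ordered rings with two extra unary relation symbols. -/
def LS : FirstOrder.Language := ⟨LSFunc, LSRel⟩

def LSfunMap : ∀ {n : ℕ}, LSFunc n → (Fin n → ℝ) → ℝ
  | _, LSFunc.zero, _ => 0
  | _, LSFunc.one, _ => 1
  | _, LSFunc.add, v => v 0 + v 1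
  | _, LSFunc.mul, v => v 0 * v 1

def LSRelMap (S1 S2 : Set ℝ) : ∀ {n : ℕ}, LSRel n → (Fin n → ℝ) → Prop
  | _, LSRel.lt, v => v 0 < v 1
  | _, LSRel.S1, v => v 0 ∈ S1
  | _, LSRel.S2, v => v 0 ∈ S2

/-- The L(S1,S2)-structure (ℝ; 0, 1, +, ·, <, S1, S2). -/
def lsStruct (S1 S2 : Set ℝ) : LS.Structure ℝ :=
  ⟨fun {_} => LSfunMap, fun {_} => LSRelMap S1 S2⟩

/-- Realization of a formula with two free variables in (ℝ; 0,1,+,·,<,S1,S2). -/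
def RealizesLS (S1 S2 : Set ℝ) (ψ : LS.Formula (Fin 2)) (a b : ℝ) : Prop :=
  letI := lsStruct S1 S2
  ψ.Realize ![a, b]

noncomputable section
namespace PWLA
open scoped Classical

/-- The compression map ℝ → (0,1). -/
def tmap (s : ℝ) : ℝ := if s < 0 then 1/(2-2*s) else (1+2*s)/(2+2*s)

lemma tmap_pos (s : ℝ) : 0 < tmap s := by
  unfold tmap
  split_ifs with h
  · have : (0:ℝ) < 2 - 2*s := by linarith
    positivity
  · push_neg at h
    positivity

lemma tmap_lt_one (s : ℝ) : tmap s < 1 := by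
  unfold tmap
  split_ifs with h
  · rw [div_lt_one (by linarith)]; linarith
  · push_neg at h
    rw [div_lt_one (by linarith)]; linarith

lemma tmap_lt_half (s : ℝ) (h : s < 0) : tmap s < 1/2 := by
  unfold tmap; rw [if_pos h]
  rw [div_lt_div_iff₀ (by linarith) (by norm_num)]; linarith

lemma half_le_tmap (s : ℝ) (h : ¬ s < 0) : 1/2 ≤ tmap s := by
  push_neg at h
  unfold tmap; rw [if_neg (not_lt.mpr h)]
  rw [div_le_div_iff₀ (by norm_num) (by linarith)]; linarith

lemma tmap_strictMono : StrictMono tmap := by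
  intro a b hab
  by_cases ha : a < 0 <;> by_cases hb : b < 0
  · unfold tmap; rw [if_pos ha, if_pos hb]
    apply div_lt_div_of_pos_left <;> [norm_num; linarith; linarith]
  · exact lt_of_lt_of_le (tmap_lt_half a ha) (half_le_tmap b hb)
  · exact absurd (hab.trans hb) ha
  · unfold tmap; rw [if_neg ha, if_neg hb]
    push_neg at ha hb
    rw [div_lt_div_iff₀ (by linarith) (by linarith)]; nlinarith

lemma tmap_inj : Function.Injective tmap := tmap_strictMono.injective


variable (S1 S2 : Finset ℝ)

/-- Image of S1 ∪ S2 under tmap. -/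
def TT : Finset ℝ := (S1 ∪ S2).image tmap

/-- Breakpoint anchor set including 0 and 1. -/
def EE : Finset ℝ := insert 0 (insert 1 (TT S1 S2))

lemma zero_mem_EE : (0:ℝ) ∈ EE S1 S2 := Finset.mem_insert_self _ _
lemma one_mem_EE : (1:ℝ) ∈ EE S1 S2 :=
  Finset.mem_insert_of_mem (Finset.mem_insert_self _ _)
lemma TT_subset_EE : TT S1 S2 ⊆ EE S1 S2 := fun u hu =>
  Finset.mem_insert_of_mem (Finset.mem_insert_of_mem hu)

/-- The set of gaps between elements of EE. -/
def gaps : Finset ℝ :=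
  ((EE S1 S2) ×ˢ (EE S1 S2)).filter (fun p => p.1 < p.2) |>.image fun p => p.2 - p.1

lemma gaps_nonempty : (gaps S1 S2).Nonempty := by
  refine ⟨1, Finset.mem_image.2 ⟨(0,1), ?_, by norm_num⟩⟩
  simp [Finset.mem_filter, Finset.mem_product, zero_mem_EE, one_mem_EE]

/-- The minimal gap. -/
def gpe : ℝ := (gaps S1 S2).min' (gaps_nonempty S1 S2)

/-- The bump half-width. -/
def wd : ℝ := gpe S1 S2 / 3

lemma gpe_pos : 0 < gpe S1 S2 := by
  have h := (gaps S1 S2).min'_mem (gaps_nonempty S1 S2)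
  obtain ⟨p, hp, he⟩ := Finset.mem_image.1 h
  rw [Finset.mem_filter] at hp
  rw [gpe, ← he]
  linarith [hp.2]

lemma wd_pos : 0 < wd S1 S2 := by have := gpe_pos S1 S2; rw [wd]; linarith

lemma gpe_le (u v : ℝ) (hu : u ∈ EE S1 S2) (hv : v ∈ EE S1 S2) (huv : u < v) :
    gpe S1 S2 ≤ v - u := by
  apply Finset.min'_le
  exact Finset.mem_image.2 ⟨(u,v), Finset.mem_filter.2 ⟨Finset.mem_product.2 ⟨hu, hv⟩, huv⟩, rfl⟩

lemma gap_ge (u v : ℝ) (hu : u ∈ EE S1 S2) (hv : v ∈ EE S1 S2) (huv : u < v) :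
    3 * wd S1 S2 ≤ v - u := by
  have := gpe_le S1 S2 u v hu hv huv; rw [wd]; linarith

lemma wd_le_one : wd S1 S2 ≤ 1 := by
  have := gpe_le S1 S2 0 1 (zero_mem_EE S1 S2) (one_mem_EE S1 S2) one_pos
  rw [wd]; linarith

lemma TT_bounds {u : ℝ} (hu : u ∈ TT S1 S2) :
    3 * wd S1 S2 ≤ u ∧ u + 3 * wd S1 S2 ≤ 1 := by
  obtain ⟨s, _, rfl⟩ := Finset.mem_image.1 hu
  constructor
  · have := gap_ge S1 S2 0 _ (zero_mem_EE S1 S2) (TT_subset_EE S1 S2 hu) (tmap_pos s)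
    linarith
  · have := gap_ge S1 S2 _ 1 (TT_subset_EE S1 S2 hu) (one_mem_EE S1 S2) (tmap_lt_one s)
    linarith

lemma TT_sep {u v : ℝ} (hu : u ∈ TT S1 S2) (hv : v ∈ TT S1 S2) (hne : u ≠ v) :
    3 * wd S1 S2 ≤ |v - u| := by
  rcases hne.lt_or_gt with h | h
  · rw [abs_of_pos (by linarith)]
    exact gap_ge S1 S2 u v (TT_subset_EE S1 S2 hu) (TT_subset_EE S1 S2 hv) h
  · rw [abs_of_neg (by linarith)]
    have := gap_ge S1 S2 v u (TT_subset_EE S1 S2 hv) (TT_subset_EE S1 S2 hu) h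
    linarith

/-- A triangular bump of half-width w, height 1/w, centered at u. -/
def Bmp (w u x : ℝ) : ℝ := max (w - |x - u|) 0 / (w * w)

lemma Bmp_continuous (w u : ℝ) : Continuous (Bmp w u) := by
  unfold Bmp
  exact (((continuous_const.sub ((continuous_id.sub continuous_const).abs)).max
    continuous_const).div_const _)

lemma Bmp_eq_zero {w u x : ℝ} (h : w ≤ |x - u|) : Bmp w u x = 0 := by
  unfold Bmp
  rw [max_eq_right (by linarith), zero_div]

lemma Bmp_val {w u x : ℝ} (h : |x - u| ≤ w) : Bmp w u x = (w - |x - u|) / (w * w) := by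
  unfold Bmp
  rw [max_eq_left (by linarith)]

/-- The piecewise linear function. -/
def ff : ℝ → ℝ := fun x =>
  (∑ s ∈ S1, Bmp (wd S1 S2) (tmap s) x) - (∑ s ∈ S2, Bmp (wd S1 S2) (tmap s) x)

lemma ff_continuous : Continuous (ff S1 S2) := by
  unfold ff
  exact (continuous_finset_sum _ fun s _ => Bmp_continuous _ _).sub
    (continuous_finset_sum _ fun s _ => Bmp_continuous _ _)

lemma ff_far (x : ℝ) (h : ∀ s ∈ S1 ∪ S2, wd S1 S2 ≤ |x - tmap s|) : ff S1 S2 x = 0 := by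
  unfold ff
  rw [Finset.sum_eq_zero, Finset.sum_eq_zero, sub_zero]
  · exact fun s hs => Bmp_eq_zero (h s (Finset.mem_union_right _ hs))
  · exact fun s hs => Bmp_eq_zero (h s (Finset.mem_union_left _ hs))

lemma near_unique {s0 s : ℝ} (hs0 : s0 ∈ S1 ∪ S2) (hs : s ∈ S1 ∪ S2) (hne : s ≠ s0)
    {x : ℝ} (h : |x - tmap s0| < wd S1 S2) : wd S1 S2 ≤ |x - tmap s| := by
  have hsep := TT_sep S1 S2 (Finset.mem_image_of_mem tmap hs0) (Finset.mem_image_of_mem tmap hs)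
    (fun he => hne (tmap_inj he.symm))
  have htri : |tmap s - tmap s0| ≤ |x - tmap s| + |x - tmap s0| := by
    calc |tmap s - tmap s0| = |(tmap s - x) + (x - tmap s0)| := by ring_nf
      _ ≤ |tmap s - x| + |x - tmap s0| := abs_add_le _ _
      _ = |x - tmap s| + |x - tmap s0| := by rw [abs_sub_comm]
  have hw := wd_pos S1 S2
  linarith

lemma ff_near1 (hd : Disjoint S1 S2) {s0 x : ℝ} (hs0 : s0 ∈ S1)
    (h : |x - tmap s0| < wd S1 S2) :
    ff S1 S2 x = (wd S1 S2 - |x - tmap s0|) / (wd S1 S2 * wd S1 S2) := by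
  unfold ff
  rw [Finset.sum_eq_single_of_mem s0 hs0, Finset.sum_eq_zero, sub_zero, Bmp_val h.le]
  · intro s hs
    exact Bmp_eq_zero (near_unique S1 S2 (Finset.mem_union_left _ hs0)
      (Finset.mem_union_right _ hs)
      (fun he => Finset.disjoint_left.1 hd (he ▸ hs0) hs) h)
  · intro s hs hne
    exact Bmp_eq_zero (near_unique S1 S2 (Finset.mem_union_left _ hs0)
      (Finset.mem_union_left _ hs) hne h)

lemma ff_near2 (hd : Disjoint S1 S2) {s0 x : ℝ} (hs0 : s0 ∈ S2)
    (h : |x - tmap s0| < wd S1 S2) :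
    ff S1 S2 x = -((wd S1 S2 - |x - tmap s0|) / (wd S1 S2 * wd S1 S2)) := by
  unfold ff
  rw [Finset.sum_eq_single_of_mem s0 hs0, Finset.sum_eq_zero, zero_sub, Bmp_val h.le]
  · intro s hs
    exact Bmp_eq_zero (near_unique S1 S2 (Finset.mem_union_right _ hs0)
      (Finset.mem_union_left _ hs)
      (fun he => Finset.disjoint_left.1 hd hs (he ▸ hs0)) h)
  · intro s hs hne
    exact Bmp_eq_zero (near_unique S1 S2 (Finset.mem_union_right _ hs0)
      (Finset.mem_union_right _ hs) hne h)


/-! ### Piecewise linearity -/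

lemma poly_Iic (a : ℝ) : IsPolyhedron1 (Set.Iic a) := by
  refine ⟨{(-1, a)}, ?_⟩
  ext x
  simp only [Set.mem_Iic, Set.mem_setOf_eq, Finset.mem_singleton, forall_eq]
  constructor <;> intro h <;> [linarith; nlinarith]

lemma poly_Ici (a : ℝ) : IsPolyhedron1 (Set.Ici a) := by
  refine ⟨{(1, -a)}, ?_⟩
  ext x
  simp only [Set.mem_Ici, Set.mem_setOf_eq, Finset.mem_singleton, forall_eq]
  constructor <;> intro h <;> [linarith; nlinarith]

lemma poly_Icc (a b : ℝ) : IsPolyhedron1 (Set.Icc a b) := by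
  refine ⟨{(1, -a), (-1, b)}, ?_⟩
  ext x
  simp only [Set.mem_Icc, Set.mem_setOf_eq, Finset.mem_insert, Finset.mem_singleton]
  constructor
  · rintro ⟨h1, h2⟩ p (rfl | rfl) <;> simp <;> linarith
  · intro h
    have h1 := h (1, -a) (Or.inl rfl)
    have h2 := h (-1, b) (Or.inr rfl)
    simp at h1 h2
    constructor <;> linarith

/-- Breakpoints of ff. -/
def DD : Finset ℝ :=
  EE S1 S2 ∪ (TT S1 S2).image (· - wd S1 S2) ∪ (TT S1 S2).image (· + wd S1 S2)

lemma zero_mem_DD : (0:ℝ) ∈ DD S1 S2 :=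
  Finset.mem_union_left _ (Finset.mem_union_left _ (zero_mem_EE S1 S2))
lemma one_mem_DD : (1:ℝ) ∈ DD S1 S2 :=
  Finset.mem_union_left _ (Finset.mem_union_left _ (one_mem_EE S1 S2))

/-- Each bump is affine on closed intervals missing its three breakpoints. -/
lemma Bmp_affine {u : ℝ} (hu : u ∈ TT S1 S2) {p q : ℝ} (hpq : p < q)
    (hadj : ∀ d ∈ DD S1 S2, d ≤ p ∨ q ≤ d) :
    ∃ a b : ℝ, ∀ x ∈ Set.Icc p q, Bmp (wd S1 S2) u x = a * x + b := by
  set w := wd S1 S2 with hw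
  have hwpos := wd_pos S1 S2
  have hmem1 : u - w ∈ DD S1 S2 :=
    Finset.mem_union_left _ (Finset.mem_union_right _ (Finset.mem_image_of_mem _ hu))
  have hmem2 : u + w ∈ DD S1 S2 := Finset.mem_union_right _ (Finset.mem_image_of_mem _ hu)
  have hmem0 : u ∈ DD S1 S2 :=
    Finset.mem_union_left _ (Finset.mem_union_left _ (TT_subset_EE S1 S2 hu))
  rcases hadj _ hmem1 with h1 | h1
  · -- u - w ≤ p
    rcases hadj _ hmem2 with h2 | h2
    · -- u + w ≤ p : far right of bump
      refine ⟨0, 0, fun x hx => ?_⟩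
      rw [Bmp_eq_zero (by rw [abs_of_nonneg (by linarith [hx.1])]; linarith [hx.1])]
      ring
    · -- q ≤ u + w
      rcases hadj _ hmem0 with h0 | h0
      · -- u ≤ p : on [u, u+w], descending branch
        refine ⟨-(1/(w*w)), (u+w)/(w*w), fun x hx => ?_⟩
        rw [Bmp_val (by rw [abs_of_nonneg (by linarith [hx.1])]; linarith [hx.2])]
        rw [abs_of_nonneg (by linarith [hx.1])]
        field_simp
        ring
      · -- q ≤ u : on [u-w, u], ascending branch
        refine ⟨1/(w*w), (w-u)/(w*w), fun x hx => ?_⟩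
        rw [Bmp_val (by rw [abs_of_nonpos (by linarith [hx.2])]; linarith [hx.1])]
        rw [abs_of_nonpos (by linarith [hx.2])]
        field_simp
        ring
  · -- q ≤ u - w : far left of bump
    refine ⟨0, 0, fun x hx => ?_⟩
    rw [Bmp_eq_zero (by rw [abs_of_nonpos (by linarith [hx.2])]; linarith [hx.2])]
    ring

lemma sum_affine {β : Type*} (S : Finset β) (g : β → ℝ → ℝ) (P : Set ℝ)
    (h : ∀ s ∈ S, ∃ a b : ℝ, ∀ x ∈ P, g s x = a * x + b) :
    ∃ a b : ℝ, ∀ x ∈ P, (∑ s ∈ S, g s x) = a * x + b := by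
  classical
  induction S using Finset.induction_on with
  | empty => exact ⟨0, 0, fun x _ => by simp⟩
  | insert _ _ hni ih =>
    rename_i c T
    obtain ⟨a1, b1, h1⟩ := h c (Finset.mem_insert_self c T)
    obtain ⟨a2, b2, h2⟩ := ih fun s hs => h s (Finset.mem_insert_of_mem hs)
    refine ⟨a1 + a2, b1 + b2, fun x hx => ?_⟩
    rw [Finset.sum_insert hni, h1 x hx, h2 x hx]
    ring

lemma ff_affine_piece {p q : ℝ} (hpq : p < q)
    (hadj : ∀ d ∈ DD S1 S2, d ≤ p ∨ q ≤ d) :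
    ∃ a b : ℝ, ∀ x ∈ Set.Icc p q, ff S1 S2 x = a * x + b := by
  obtain ⟨a1, b1, h1⟩ := sum_affine S1 (fun s x => Bmp (wd S1 S2) (tmap s) x) _
    (fun s hs => Bmp_affine S1 S2
      (Finset.mem_image_of_mem _ (Finset.mem_union_left _ hs)) hpq hadj)
  obtain ⟨a2, b2, h2⟩ := sum_affine S2 (fun s x => Bmp (wd S1 S2) (tmap s) x) _
    (fun s hs => Bmp_affine S1 S2
      (Finset.mem_image_of_mem _ (Finset.mem_union_right _ hs)) hpq hadj)
  refine ⟨a1 - a2, b1 - b2, fun x hx => ?_⟩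
  rw [ff, h1 x hx, h2 x hx]
  ring

lemma ff_zero_left {x : ℝ} (hx : x ≤ 0) : ff S1 S2 x = 0 := by
  apply ff_far
  intro s hs
  have hb := (TT_bounds S1 S2 (Finset.mem_image_of_mem tmap hs)).1
  have hw := wd_pos S1 S2
  rw [abs_of_nonpos (by linarith)]
  linarith

lemma ff_zero_right {x : ℝ} (hx : 1 ≤ x) : ff S1 S2 x = 0 := by
  apply ff_far
  intro s hs
  have hb := (TT_bounds S1 S2 (Finset.mem_image_of_mem tmap hs)).2
  have hw := wd_pos S1 S2
  rw [abs_of_nonneg (by linarith)]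
  linarith

/-- The pieces witnessing piecewise linearity. -/
def Ps : Finset (Set ℝ) :=
  insert (Set.Iic 0) (insert (Set.Ici 1)
    ((((DD S1 S2) ×ˢ (DD S1 S2)).filter
      (fun p => p.1 < p.2 ∧ ∀ d ∈ DD S1 S2, d ≤ p.1 ∨ p.2 ≤ d)).image
        fun p => Set.Icc p.1 p.2))

lemma ff_pwl : IsPWL1 (ff S1 S2) := by
  refine ⟨ff_continuous S1 S2, Ps S1 S2, ?_, ?_, ?_⟩
  · intro P hP
    rw [Ps, Finset.mem_insert, Finset.mem_insert] at hP
    rcases hP with rfl | rfl | hP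
    · exact poly_Iic 0
    · exact poly_Ici 1
    · obtain ⟨p, _, rfl⟩ := Finset.mem_image.1 hP
      exact poly_Icc _ _
  · rw [Set.eq_univ_iff_forall]
    intro x
    simp only [Set.mem_iUnion]
    by_cases hx0 : x ≤ 0
    · exact ⟨Set.Iic 0, Finset.mem_insert_self _ _, hx0⟩
    by_cases hx1 : 1 ≤ x
    · exact ⟨Set.Ici 1, Finset.mem_insert_of_mem (Finset.mem_insert_self _ _), hx1⟩
    push_neg at hx0 hx1
    -- 0 < x < 1
    have hne1 : ((DD S1 S2).filter (· < x)).Nonempty :=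
      ⟨0, Finset.mem_filter.2 ⟨zero_mem_DD S1 S2, hx0⟩⟩
    set a := ((DD S1 S2).filter (· < x)).max' hne1 with ha
    have haD : a ∈ DD S1 S2 := (Finset.mem_filter.1 (Finset.max'_mem _ hne1)).1
    have hax : a < x := (Finset.mem_filter.1 (Finset.max'_mem _ hne1)).2
    have hamax : ∀ d ∈ DD S1 S2, d < x → d ≤ a := fun d hd hdx =>
      Finset.le_max' ((DD S1 S2).filter (· < x)) d (Finset.mem_filter.2 ⟨hd, hdx⟩)
    by_cases hxD : x ∈ DD S1 S2
    · refine ⟨Set.Icc a x, ?_, ⟨hax.le, le_refl x⟩⟩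
      refine Finset.mem_insert_of_mem (Finset.mem_insert_of_mem (Finset.mem_image.2
        ⟨(a, x), Finset.mem_filter.2 ⟨Finset.mem_product.2 ⟨haD, hxD⟩, hax, ?_⟩, rfl⟩))
      intro d hd
      rcases lt_or_ge d x with h | h
      · exact Or.inl (hamax d hd h)
      · exact Or.inr h
    · have hne2 : ((DD S1 S2).filter (x < ·)).Nonempty :=
        ⟨1, Finset.mem_filter.2 ⟨one_mem_DD S1 S2, hx1⟩⟩
      set b := ((DD S1 S2).filter (x < ·)).min' hne2 with hb
      have hbD : b ∈ DD S1 S2 := (Finset.mem_filter.1 (Finset.min'_mem _ hne2)).1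
      have hxb : x < b := (Finset.mem_filter.1 (Finset.min'_mem _ hne2)).2
      have hbmin : ∀ d ∈ DD S1 S2, x < d → b ≤ d := fun d hd hdx =>
        Finset.min'_le ((DD S1 S2).filter (x < ·)) d (Finset.mem_filter.2 ⟨hd, hdx⟩)
      refine ⟨Set.Icc a b, ?_, ⟨hax.le, hxb.le⟩⟩
      refine Finset.mem_insert_of_mem (Finset.mem_insert_of_mem (Finset.mem_image.2
        ⟨(a, b), Finset.mem_filter.2 ⟨Finset.mem_product.2 ⟨haD, hbD⟩, hax.trans hxb, ?_⟩, rfl⟩))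
      intro d hd
      rcases lt_or_ge d x with h | h
      · exact Or.inl (hamax d hd h)
      · rcases h.eq_or_lt with rfl | h
        · exact absurd hd hxD
        · exact Or.inr (hbmin d hd h)
  · intro P hP
    rw [Ps, Finset.mem_insert, Finset.mem_insert] at hP
    rcases hP with rfl | rfl | hP
    · exact ⟨0, 0, fun x hx => by rw [ff_zero_left S1 S2 hx]; ring⟩
    · exact ⟨0, 0, fun x hx => by rw [ff_zero_right S1 S2 hx]; ring⟩
    · obtain ⟨p, hp, rfl⟩ := Finset.mem_image.1 hP
      obtain ⟨_, h1, h2⟩ := Finset.mem_filter.1 hp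
      exact ff_affine_piece S1 S2 h1 h2


/-! ### The integral -/

lemma Bmp_intgr (w u a b : ℝ) : IntervalIntegrable (Bmp w u) MeasureTheory.volume a b :=
  (Bmp_continuous w u).intervalIntegrable _ _

lemma integral_Bmp {w u : ℝ} (hw : 0 < w) (h0 : 0 ≤ u - w) (h1 : u + w ≤ 1) :
    ∫ x in (0:ℝ)..1, Bmp w u x = 1 := by
  have huw : u - w ≤ u := by linarith
  have huw' : u ≤ u + w := by linarith
  have i1 : ∫ x in (0:ℝ)..(u-w), Bmp w u x = 0 := by
    rw [intervalIntegral.integral_congr (g := fun _ => (0:ℝ)) ?_, intervalIntegral.integral_const]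
    · simp
    · intro x hx
      rw [Set.uIcc_of_le h0] at hx
      exact Bmp_eq_zero (by rw [abs_of_nonpos (by linarith [hx.2])]; linarith [hx.2])
  have i4 : ∫ x in (u+w)..1, Bmp w u x = 0 := by
    rw [intervalIntegral.integral_congr (g := fun _ => (0:ℝ)) ?_, intervalIntegral.integral_const]
    · simp
    · intro x hx
      rw [Set.uIcc_of_le h1] at hx
      exact Bmp_eq_zero (by rw [abs_of_nonneg (by linarith [hx.1])]; linarith [hx.1])
  have i2 : ∫ x in (u-w)..u, Bmp w u x = 1/2 := by
    rw [intervalIntegral.integral_congr (g := fun x => (x - (u-w))/(w*w)) ?_]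
    · rw [intervalIntegral.integral_div,
        intervalIntegral.integral_sub intervalIntegral.intervalIntegrable_id
          intervalIntegrable_const,
        integral_id, intervalIntegral.integral_const, smul_eq_mul]
      field_simp
      ring
    · intro x hx
      rw [Set.uIcc_of_le huw] at hx
      rw [Bmp_val (by rw [abs_of_nonpos (by linarith [hx.2])]; linarith [hx.1])]
      rw [abs_of_nonpos (by linarith [hx.2])]
      ring_nf
  have i3 : ∫ x in u..(u+w), Bmp w u x = 1/2 := by
    rw [intervalIntegral.integral_congr (g := fun x => ((u+w) - x)/(w*w)) ?_]
    · rw [intervalIntegral.integral_div,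
        intervalIntegral.integral_sub intervalIntegrable_const
          intervalIntegral.intervalIntegrable_id,
        integral_id, intervalIntegral.integral_const, smul_eq_mul]
      field_simp
      ring
    · intro x hx
      rw [Set.uIcc_of_le huw'] at hx
      rw [Bmp_val (by rw [abs_of_nonneg (by linarith [hx.1])]; linarith [hx.2])]
      rw [abs_of_nonneg (by linarith [hx.1])]
      ring_nf
  have s1 : ∫ x in (0:ℝ)..1, Bmp w u x
      = (∫ x in (0:ℝ)..(u-w), Bmp w u x) + ∫ x in (u-w)..1, Bmp w u x :=
    (intervalIntegral.integral_add_adjacent_intervals (Bmp_intgr _ _ _ _) (Bmp_intgr _ _ _ _)).symm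
  have s2 : ∫ x in (u-w)..1, Bmp w u x
      = (∫ x in (u-w)..u, Bmp w u x) + ∫ x in u..1, Bmp w u x :=
    (intervalIntegral.integral_add_adjacent_intervals (Bmp_intgr _ _ _ _) (Bmp_intgr _ _ _ _)).symm
  have s3 : ∫ x in u..(1:ℝ), Bmp w u x
      = (∫ x in u..(u+w), Bmp w u x) + ∫ x in (u+w)..1, Bmp w u x :=
    (intervalIntegral.integral_add_adjacent_intervals (Bmp_intgr _ _ _ _) (Bmp_intgr _ _ _ _)).symm
  rw [s1, s2, s3, i1, i2, i3, i4]
  norm_num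

lemma integral_ff : ∫ x in (0:ℝ)..1, ff S1 S2 x = (S1.card : ℝ) - S2.card := by
  have hint : ∀ u ∈ (S1 ∪ S2).image tmap, ∫ x in (0:ℝ)..1, Bmp (wd S1 S2) u x = 1 := by
    intro u hu
    have hb := TT_bounds S1 S2 hu
    have hw := wd_pos S1 S2
    exact integral_Bmp hw (by linarith [hb.1]) (by linarith [hb.2])
  unfold ff
  rw [intervalIntegral.integral_sub
    (f := fun x => ∑ s ∈ S1, Bmp (wd S1 S2) (tmap s) x)
    (g := fun x => ∑ s ∈ S2, Bmp (wd S1 S2) (tmap s) x)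
    ((continuous_finset_sum _ fun s _ => Bmp_continuous _ _).intervalIntegrable _ _)
    ((continuous_finset_sum _ fun s _ => Bmp_continuous _ _).intervalIntegrable _ _)]
  rw [intervalIntegral.integral_finset_sum (fun s _ => Bmp_intgr _ _ _ _),
    intervalIntegral.integral_finset_sum (fun s _ => Bmp_intgr _ _ _ _)]
  have e1 : ∀ s ∈ S1, ∫ x in (0:ℝ)..1, Bmp (wd S1 S2) (tmap s) x = 1 := fun s hs =>
    hint _ (Finset.mem_image_of_mem tmap (Finset.mem_union_left _ hs))
  have e2 : ∀ s ∈ S2, ∫ x in (0:ℝ)..1, Bmp (wd S1 S2) (tmap s) x = 1 := fun s hs =>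
    hint _ (Finset.mem_image_of_mem tmap (Finset.mem_union_right _ hs))
  rw [Finset.sum_congr rfl e1, Finset.sum_congr rfl e2]
  simp

lemma integral_ff_iff : (∫ x in (0:ℝ)..1, ff S1 S2 x) = 0 ↔ S1.card = S2.card := by
  rw [integral_ff, sub_eq_zero]
  exact_mod_cast Iff.rfl


/-! ### Semantics of the formula -/

def TS (s u : ℝ) : Prop :=
  (¬ s < 0 ∧ u * ((1+1) + (s+s)) = 1 + (s+s)) ∨ (s < 0 ∧ u + u = 1 + (u*s + u*s))

lemma TS_iff (s u : ℝ) : TS s u ↔ u = tmap s := by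
  unfold TS tmap
  constructor
  · rintro (⟨hn, he⟩ | ⟨hn, he⟩)
    · push_neg at hn
      rw [if_neg (not_lt.2 hn), eq_div_iff (by linarith : (2:ℝ) + 2*s ≠ 0)]
      linear_combination he
    · rw [if_pos hn, eq_div_iff (by linarith : (2:ℝ) - 2*s ≠ 0)]
      linear_combination he
  · intro he
    by_cases hn : s < 0
    · right
      refine ⟨hn, ?_⟩
      rw [if_pos hn, eq_div_iff (by linarith : (2:ℝ) - 2*s ≠ 0)] at he
      linear_combination he
    · left
      refine ⟨hn, ?_⟩
      push_neg at hn
      rw [if_neg (not_lt.2 hn), eq_div_iff (by linarith : (2:ℝ) + 2*s ≠ 0)] at he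
      linear_combination he

def USem (A B : Set ℝ) (u : ℝ) : Prop := ∃ s, (s ∈ A ∨ s ∈ B) ∧ TS s u
def U1Sem (A : Set ℝ) (u : ℝ) : Prop := ∃ s, s ∈ A ∧ TS s u
def ESem (A B : Set ℝ) (u : ℝ) : Prop := USem A B u ∨ u = 0 ∨ u = 1
def WSem (A B : Set ℝ) (w : ℝ) : Prop := ∃ a b : ℝ, ESem A B a ∧ ESem A B b ∧ a < b ∧
  a + (w + (w + w)) = b ∧
  ∀ c d : ℝ, ESem A B c → ESem A B d → c < d → ¬ (a + d < b + c)
def CS0 (A B : Set ℝ) (x y w : ℝ) : Prop :=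
  y = 0 ∧ ∀ u, USem A B u → ¬ (u < x + w ∧ x < u + w)
def CS1 (A : Set ℝ) (x y w : ℝ) : Prop := ∃ u, U1Sem A u ∧ (u < x + w ∧ x < u + w) ∧
  ((¬ u < x ∧ y * w * w + u = w + x) ∨ (¬ x < u ∧ y * w * w + x = w + u))
def CS2 (B : Set ℝ) (x y w : ℝ) : Prop := ∃ u, U1Sem B u ∧ (u < x + w ∧ x < u + w) ∧
  ((¬ u < x ∧ (y * w * w + w) + x = u) ∨ (¬ x < u ∧ (y * w * w + w) + u = x))
def PsiSem (A B : Set ℝ) (x y : ℝ) : Prop :=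
  ∃ w, WSem A B w ∧ (CS0 A B x y w ∨ CS1 A x y w ∨ CS2 B x y w)

lemma USem_iff (u : ℝ) : USem ↑S1 ↑S2 u ↔ u ∈ TT S1 S2 := by
  unfold USem TT
  simp only [TS_iff, Finset.mem_image, Finset.mem_union, Finset.mem_coe]
  constructor
  · rintro ⟨s, hs, rfl⟩; exact ⟨s, hs, rfl⟩
  · rintro ⟨s, hs, rfl⟩; exact ⟨s, hs, rfl⟩

lemma U1Sem_iff (S : Finset ℝ) (u : ℝ) : U1Sem ↑S u ↔ u ∈ S.image tmap := by
  unfold U1Sem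
  simp only [TS_iff, Finset.mem_image, Finset.mem_coe]
  constructor
  · rintro ⟨s, hs, rfl⟩; exact ⟨s, hs, rfl⟩
  · rintro ⟨s, hs, rfl⟩; exact ⟨s, hs, rfl⟩

lemma ESem_iff (u : ℝ) : ESem ↑S1 ↑S2 u ↔ u ∈ EE S1 S2 := by
  unfold ESem EE
  rw [Finset.mem_insert, Finset.mem_insert, USem_iff]
  tauto

lemma WSem_iff (w : ℝ) : WSem ↑S1 ↑S2 w ↔ w = wd S1 S2 := by
  have hmin := (gaps S1 S2).min'_mem (gaps_nonempty S1 S2)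
  obtain ⟨p, hp, hpe⟩ := Finset.mem_image.1 hmin
  rw [Finset.mem_filter, Finset.mem_product] at hp
  constructor
  · rintro ⟨a, b, ha, hb, hab, heq, hminim⟩
    rw [ESem_iff] at ha hb
    have h1 : gpe S1 S2 ≤ b - a := gpe_le S1 S2 a b ha hb hab
    have h2 := hminim p.1 p.2 ((ESem_iff S1 S2 _).2 hp.1.1) ((ESem_iff S1 S2 _).2 hp.1.2) hp.2
    rw [wd]
    have h3 : b - a ≤ p.2 - p.1 := by linarith [not_lt.1 h2]
    have hg : p.2 - p.1 = gpe S1 S2 := hpe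
    linarith
  · rintro rfl
    refine ⟨p.1, p.2, (ESem_iff S1 S2 _).2 hp.1.1, (ESem_iff S1 S2 _).2 hp.1.2, hp.2, ?_, ?_⟩
    · have hg : p.2 - p.1 = gpe S1 S2 := hpe
      have h3w : wd S1 S2 * 3 = gpe S1 S2 := by rw [wd]; ring
      linarith
    · intro c d hc hd hcd
      rw [ESem_iff] at hc hd
      have := gpe_le S1 S2 c d hc hd hcd
      have h4 : gpe S1 S2 = p.2 - p.1 := hpe.symm
      intro hlt
      linarith

lemma psiSem_iff (hd : Disjoint S1 S2) (x y : ℝ) :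
    PsiSem ↑S1 ↑S2 x y ↔ ff S1 S2 x = y := by
  have hw := wd_pos S1 S2
  have hwne : wd S1 S2 ≠ 0 := ne_of_gt hw
  constructor
  · rintro ⟨w', hW, hC⟩
    have hww : w' = wd S1 S2 := (WSem_iff S1 S2 w').1 hW
    subst hww
    rcases hC with ⟨hy0, hfar⟩ | ⟨u, hU, ⟨hs1, hs2⟩, hcs⟩ | ⟨u, hU, ⟨hs1, hs2⟩, hcs⟩
    · rw [hy0]
      apply ff_far
      intro s hs
      by_contra h'
      push_neg at h'
      obtain ⟨h1', h2'⟩ := abs_lt.1 h'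
      exact hfar (tmap s) ((USem_iff S1 S2 _).2 (Finset.mem_image_of_mem tmap hs))
        ⟨by linarith, by linarith⟩
    · obtain ⟨s0, hs0, hTS⟩ := hU
      have hu : u = tmap s0 := (TS_iff _ _).1 hTS
      subst hu
      have hnear : |x - tmap s0| < wd S1 S2 := abs_lt.2 ⟨by linarith, by linarith⟩
      rw [ff_near1 S1 S2 hd hs0 hnear]
      rcases hcs with ⟨hxu, he⟩ | ⟨hxu, he⟩
      · rw [abs_of_nonpos (by push_neg at hxu; linarith)]
        rw [div_eq_iff (by positivity)]
        linear_combination -he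
      · rw [abs_of_nonneg (by push_neg at hxu; linarith)]
        rw [div_eq_iff (by positivity)]
        linear_combination -he
    · obtain ⟨s0, hs0, hTS⟩ := hU
      have hu : u = tmap s0 := (TS_iff _ _).1 hTS
      subst hu
      have hnear : |x - tmap s0| < wd S1 S2 := abs_lt.2 ⟨by linarith, by linarith⟩
      rw [ff_near2 S1 S2 hd hs0 hnear]
      rcases hcs with ⟨hxu, he⟩ | ⟨hxu, he⟩
      · rw [abs_of_nonpos (by push_neg at hxu; linarith)]
        rw [neg_eq_iff_eq_neg, div_eq_iff (by positivity)]
        linear_combination he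
      · rw [abs_of_nonneg (by push_neg at hxu; linarith)]
        rw [neg_eq_iff_eq_neg, div_eq_iff (by positivity)]
        linear_combination he
  · intro hf
    refine ⟨wd S1 S2, (WSem_iff S1 S2 _).2 rfl, ?_⟩
    by_cases hnear : ∃ s ∈ S1 ∪ S2, |x - tmap s| < wd S1 S2
    · obtain ⟨s0, hs0, hn⟩ := hnear
      obtain ⟨hn1, hn2⟩ := abs_lt.1 hn
      rcases Finset.mem_union.1 hs0 with h1 | h2
      · right; left
        refine ⟨tmap s0, ⟨s0, h1, (TS_iff _ _).2 rfl⟩, ⟨by linarith, by linarith⟩, ?_⟩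
        have hy : y = (wd S1 S2 - |x - tmap s0|) / (wd S1 S2 * wd S1 S2) := by
          rw [← hf, ff_near1 S1 S2 hd h1 hn]
        rcases le_or_gt x (tmap s0) with hxu | hxu
        · left
          refine ⟨not_lt.2 hxu, ?_⟩
          rw [abs_of_nonpos (by linarith)] at hy
          rw [hy]
          field_simp
          ring
        · right
          refine ⟨not_lt.2 hxu.le, ?_⟩
          rw [abs_of_nonneg (by linarith)] at hy
          rw [hy]
          field_simp
          ring
      · right; right
        refine ⟨tmap s0, ⟨s0, h2, (TS_iff _ _).2 rfl⟩, ⟨by linarith, by linarith⟩, ?_⟩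
        have hy : y = -((wd S1 S2 - |x - tmap s0|) / (wd S1 S2 * wd S1 S2)) := by
          rw [← hf, ff_near2 S1 S2 hd h2 hn]
        rcases le_or_gt x (tmap s0) with hxu | hxu
        · left
          refine ⟨not_lt.2 hxu, ?_⟩
          rw [abs_of_nonpos (by linarith)] at hy
          rw [hy]
          field_simp
          ring
        · right
          refine ⟨not_lt.2 hxu.le, ?_⟩
          rw [abs_of_nonneg (by linarith)] at hy
          rw [hy]
          field_simp
          ring
    · left
      push_neg at hnear
      refine ⟨?_, ?_⟩
      · rw [← hf]
        exact ff_far S1 S2 x hnear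
      · intro u hU ⟨hc1, hc2⟩
        obtain ⟨s, hs, rfl⟩ := Finset.mem_image.1 ((USem_iff S1 S2 u).1 hU)
        have := hnear s hs
        have : |x - tmap s| < wd S1 S2 := abs_lt.2 ⟨by linarith, by linarith⟩
        linarith [hnear s hs]


/-! ### The first-order formula -/

open FirstOrder.Language

section Terms
variable {α : Type}

def tz : LS.Term α := Term.func LSFunc.zero ![]
def tu : LS.Term α := Term.func LSFunc.one ![]
def tadd (t₁ t₂ : LS.Term α) : LS.Term α := Term.func LSFunc.add ![t₁, t₂]
def tmul (t₁ t₂ : LS.Term α) : LS.Term α := Term.func LSFunc.mul ![t₁, t₂]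
def flt (t₁ t₂ : LS.Term α) : LS.Formula α := Relations.formula₂ LSRel.lt t₁ t₂
def fs1 (t : LS.Term α) : LS.Formula α := Relations.formula₁ LSRel.S1 t
def fs2 (t : LS.Term α) : LS.Formula α := Relations.formula₁ LSRel.S2 t
def feq (t₁ t₂ : LS.Term α) : LS.Formula α := Term.equal t₁ t₂

end Terms

section Rlz
variable (A B : Set ℝ) {α : Type}

/-- Realization in the structure (ℝ; 0,1,+,·,<,A,B). -/
def rlz (φ : LS.Formula α) (v : α → ℝ) : Prop :=
  @Formula.Realize LS ℝ (lsStruct A B) α φ v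

/-- Term evaluation in that structure. -/
def evt (v : α → ℝ) (t : LS.Term α) : ℝ :=
  @Term.realize LS ℝ (lsStruct A B) α v t

@[simp] lemma evt_var (v : α → ℝ) (a : α) : evt A B v (Term.var a) = v a := rfl
@[simp] lemma evt_tz (v : α → ℝ) : evt A B v tz = 0 := rfl
@[simp] lemma evt_tu (v : α → ℝ) : evt A B v tu = 1 := rfl
@[simp] lemma evt_tadd (v : α → ℝ) (t₁ t₂ : LS.Term α) :
    evt A B v (tadd t₁ t₂) = evt A B v t₁ + evt A B v t₂ := rfl
@[simp] lemma evt_tmul (v : α → ℝ) (t₁ t₂ : LS.Term α) :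
    evt A B v (tmul t₁ t₂) = evt A B v t₁ * evt A B v t₂ := rfl

@[simp] lemma rlz_flt (v : α → ℝ) (t₁ t₂ : LS.Term α) :
    rlz A B (flt t₁ t₂) v ↔ evt A B v t₁ < evt A B v t₂ := by
  letI := lsStruct A B
  exact (Formula.realize_rel₂).trans Iff.rfl

@[simp] lemma rlz_fs1 (v : α → ℝ) (t : LS.Term α) :
    rlz A B (fs1 t) v ↔ evt A B v t ∈ A := by
  letI := lsStruct A B
  exact (Formula.realize_rel₁).trans Iff.rfl

@[simp] lemma rlz_fs2 (v : α → ℝ) (t : LS.Term α) :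
    rlz A B (fs2 t) v ↔ evt A B v t ∈ B := by
  letI := lsStruct A B
  exact (Formula.realize_rel₁).trans Iff.rfl

@[simp] lemma rlz_feq (v : α → ℝ) (t₁ t₂ : LS.Term α) :
    rlz A B (feq t₁ t₂) v ↔ evt A B v t₁ = evt A B v t₂ := by
  letI := lsStruct A B
  exact Formula.realize_equal

@[simp] lemma rlz_inf (v : α → ℝ) (φ ψ : LS.Formula α) :
    rlz A B (φ ⊓ ψ) v ↔ rlz A B φ v ∧ rlz A B ψ v := by
  letI := lsStruct A B
  exact Formula.realize_inf

@[simp] lemma rlz_sup (v : α → ℝ) (φ ψ : LS.Formula α) :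
    rlz A B (φ ⊔ ψ) v ↔ rlz A B φ v ∨ rlz A B ψ v := by
  letI := lsStruct A B
  exact Formula.realize_sup

@[simp] lemma rlz_not (v : α → ℝ) (φ : LS.Formula α) :
    rlz A B φ.not v ↔ ¬ rlz A B φ v := by
  letI := lsStruct A B
  exact Formula.realize_not

@[simp] lemma rlz_imp (v : α → ℝ) (φ ψ : LS.Formula α) :
    rlz A B (φ.imp ψ) v ↔ (rlz A B φ v → rlz A B ψ v) := by
  letI := lsStruct A B
  exact Formula.realize_imp

@[simp] lemma rlz_relabel {β : Type} (v : β → ℝ) (g : α → β) (φ : LS.Formula α) :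
    rlz A B (φ.relabel g) v ↔ rlz A B φ (v ∘ g) := by
  letI := lsStruct A B
  exact Formula.realize_relabel

lemma rlz_iExs {β γ : Type} [Finite γ] (v : β → ℝ) (g : α → β ⊕ γ) (φ : LS.Formula α) :
    rlz A B (Formula.iExs γ (φ.relabel g)) v ↔ ∃ i : γ → ℝ, rlz A B φ (fun a => Sum.elim v i (g a)) := by
  letI := lsStruct A B
  exact Formula.realize_iExs.trans (exists_congr fun i => Formula.realize_relabel)

lemma rlz_iAlls {β γ : Type} [Finite γ] (v : β → ℝ) (g : α → β ⊕ γ) (φ : LS.Formula α) :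
    rlz A B (Formula.iAlls γ (φ.relabel g)) v ↔ ∀ i : γ → ℝ, rlz A B φ (fun a => Sum.elim v i (g a)) := by
  letI := lsStruct A B
  exact Formula.realize_iAlls.trans (forall_congr' fun i => Formula.realize_relabel)

end Rlz

lemma exists_fin1 {P : ℝ → Prop} : (∃ i : Fin 1 → ℝ, P (i 0)) ↔ ∃ r, P r :=
  ⟨fun ⟨i, h⟩ => ⟨i 0, h⟩, fun ⟨r, h⟩ => ⟨fun _ => r, h⟩⟩

lemma exists_fin2 {P : ℝ → ℝ → Prop} : (∃ i : Fin 2 → ℝ, P (i 0) (i 1)) ↔ ∃ a b, P a b :=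
  ⟨fun ⟨i, h⟩ => ⟨i 0, i 1, h⟩, fun ⟨a, b, h⟩ => ⟨![a, b], h⟩⟩

lemma forall_fin1 {P : ℝ → Prop} : (∀ i : Fin 1 → ℝ, P (i 0)) ↔ ∀ r, P r :=
  ⟨fun h r => h fun _ => r, fun h i => h (i 0)⟩

lemma forall_fin2 {P : ℝ → ℝ → Prop} : (∀ i : Fin 2 → ℝ, P (i 0) (i 1)) ↔ ∀ a b, P a b :=
  ⟨fun h a b => h ![a, b], fun h i => h (i 0) (i 1)⟩

/-- The formula expressing u = tmap s. -/
def tmapF {α : Type} (s u : LS.Term α) : LS.Formula α :=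
  ((flt s tz).not ⊓ feq (tmul u (tadd (tadd tu tu) (tadd s s))) (tadd tu (tadd s s))) ⊔
  (flt s tz ⊓ feq (tadd u u) (tadd tu (tadd (tmul u s) (tmul u s))))

lemma rlz_tmapF (A B : Set ℝ) {α : Type} (v : α → ℝ) (s u : LS.Term α) :
    rlz A B (tmapF s u) v ↔ TS (evt A B v s) (evt A B v u) := by
  unfold tmapF TS
  simp

def UF : LS.Formula (Fin 1) :=
  Formula.iExs (Fin 1) (Formula.relabel (![Sum.inl 0, Sum.inr 0] : Fin 2 → Fin 1 ⊕ Fin 1)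
    ((fs1 (Term.var 1) ⊔ fs2 (Term.var 1)) ⊓ tmapF (Term.var 1) (Term.var 0)))

def U1F : LS.Formula (Fin 1) :=
  Formula.iExs (Fin 1) (Formula.relabel (![Sum.inl 0, Sum.inr 0] : Fin 2 → Fin 1 ⊕ Fin 1)
    (fs1 (Term.var 1) ⊓ tmapF (Term.var 1) (Term.var 0)))

def U2F : LS.Formula (Fin 1) :=
  Formula.iExs (Fin 1) (Formula.relabel (![Sum.inl 0, Sum.inr 0] : Fin 2 → Fin 1 ⊕ Fin 1)
    (fs2 (Term.var 1) ⊓ tmapF (Term.var 1) (Term.var 0)))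

lemma rlz_UF (A B : Set ℝ) (v : Fin 1 → ℝ) : rlz A B UF v ↔ USem A B (v 0) := by
  unfold UF USem
  rw [rlz_iExs]
  simp only [rlz_inf, rlz_sup, rlz_fs1, rlz_fs2, rlz_tmapF, evt_var,
    Matrix.cons_val_zero, Matrix.cons_val_one, Matrix.head_cons, Sum.elim_inl, Sum.elim_inr]
  constructor
  · rintro ⟨i, h⟩
    exact ⟨i 0, h⟩
  · rintro ⟨r, h⟩
    exact ⟨fun _ => r, h⟩

lemma rlz_U1F (A B : Set ℝ) (v : Fin 1 → ℝ) : rlz A B U1F v ↔ U1Sem A (v 0) := by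
  unfold U1F U1Sem
  rw [rlz_iExs]
  simp only [rlz_inf, rlz_fs1, rlz_tmapF, evt_var,
    Matrix.cons_val_zero, Matrix.cons_val_one, Matrix.head_cons, Sum.elim_inl, Sum.elim_inr]
  constructor
  · rintro ⟨i, h⟩
    exact ⟨i 0, h⟩
  · rintro ⟨r, h⟩
    exact ⟨fun _ => r, h⟩

lemma rlz_U2F (A B : Set ℝ) (v : Fin 1 → ℝ) : rlz A B U2F v ↔ U1Sem B (v 0) := by
  unfold U2F U1Sem
  rw [rlz_iExs]
  simp only [rlz_inf, rlz_fs2, rlz_tmapF, evt_var,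
    Matrix.cons_val_zero, Matrix.cons_val_one, Matrix.head_cons, Sum.elim_inl, Sum.elim_inr]
  constructor
  · rintro ⟨i, h⟩
    exact ⟨i 0, h⟩
  · rintro ⟨r, h⟩
    exact ⟨fun _ => r, h⟩

def EF : LS.Formula (Fin 1) := UF ⊔ (feq (Term.var 0) tz ⊔ feq (Term.var 0) tu)

lemma rlz_EF (A B : Set ℝ) (v : Fin 1 → ℝ) : rlz A B EF v ↔ ESem A B (v 0) := by
  unfold EF ESem
  rw [rlz_sup, rlz_sup, rlz_UF]
  simp

/-- context (w a b c d) = (0 1 2 3 4) -/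
def WFcd : LS.Formula (Fin 5) :=
  (EF.relabel ![(3 : Fin 5)]).imp ((EF.relabel ![(4 : Fin 5)]).imp
    ((flt (Term.var 3) (Term.var 4)).imp
      ((flt (tadd (Term.var 1) (Term.var 4)) (tadd (Term.var 2) (Term.var 3))).not)))

/-- context (w a b) = (0 1 2) -/
def WFab : LS.Formula (Fin 3) :=
  (EF.relabel ![(1 : Fin 3)]) ⊓ ((EF.relabel ![(2 : Fin 3)]) ⊓
    ((flt (Term.var 1) (Term.var 2)) ⊓
      ((feq (tadd (Term.var 1) (tadd (Term.var 0) (tadd (Term.var 0) (Term.var 0))))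
        (Term.var 2)) ⊓
        (Formula.iAlls (Fin 2) (Formula.relabel
          (![Sum.inl 0, Sum.inl 1, Sum.inl 2, Sum.inr 0, Sum.inr 1] : Fin 5 → Fin 3 ⊕ Fin 2)
          WFcd)))))

def WF : LS.Formula (Fin 1) :=
  Formula.iExs (Fin 2) (Formula.relabel (![Sum.inl 0, Sum.inr 0, Sum.inr 1] : Fin 3 → Fin 1 ⊕ Fin 2) WFab)

lemma rlz_WF (A B : Set ℝ) (v : Fin 1 → ℝ) : rlz A B WF v ↔ WSem A B (v 0) := by
  unfold WF WFab WFcd WSem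
  rw [rlz_iExs]
  simp only [rlz_inf, rlz_imp, rlz_not, rlz_flt, rlz_feq, rlz_relabel, rlz_EF, rlz_iAlls,
    evt_var, evt_tadd, Function.comp_apply, Matrix.cons_val_zero, Matrix.cons_val_one,
    Matrix.head_cons, Matrix.cons_val_two, Matrix.tail_cons, Matrix.cons_val_three,
    Matrix.cons_val_four, Matrix.cons_val_fin_one, Sum.elim_inl, Sum.elim_inr]
  constructor
  · rintro ⟨i, h1, h2, h3, h4, h5⟩
    exact ⟨i 0, i 1, h1, h2, h3, h4, fun c d => h5 ![c, d]⟩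
  · rintro ⟨a, b, h1, h2, h3, h4, h5⟩
    exact ⟨![a, b], h1, h2, h3, h4, fun j => h5 (j 0) (j 1)⟩

/-- context (x y w u) = (0 1 2 3) -/
def C0u : LS.Formula (Fin 4) :=
  (UF.relabel ![(3 : Fin 4)]).imp
    (((flt (Term.var 3) (tadd (Term.var 0) (Term.var 2))) ⊓
      (flt (Term.var 0) (tadd (Term.var 3) (Term.var 2)))).not)

def C0F : LS.Formula (Fin 3) :=
  (feq (Term.var 1) tz) ⊓
    Formula.iAlls (Fin 1) (Formula.relabel (![Sum.inl 0, Sum.inl 1, Sum.inl 2, Sum.inr 0] : Fin 4 → Fin 3 ⊕ Fin 1) C0u)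

lemma rlz_C0F (A B : Set ℝ) (v : Fin 3 → ℝ) :
    rlz A B C0F v ↔ CS0 A B (v 0) (v 1) (v 2) := by
  unfold C0F C0u CS0
  rw [rlz_inf, rlz_iAlls, rlz_feq]
  simp only [rlz_imp, rlz_not, rlz_inf, rlz_flt, rlz_relabel, rlz_UF,
    evt_var, evt_tadd, evt_tz, Function.comp_apply, Matrix.cons_val_zero, Matrix.cons_val_one,
    Matrix.head_cons, Matrix.cons_val_two, Matrix.tail_cons, Matrix.cons_val_three,
    Matrix.cons_val_fin_one, Sum.elim_inl, Sum.elim_inr]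
  exact and_congr_right fun _ => ⟨fun h r => h fun _ => r, fun h i => h (i 0)⟩

/-- context (x y w u) = (0 1 2 3) -/
def C1u : LS.Formula (Fin 4) :=
  (U1F.relabel ![(3 : Fin 4)]) ⊓
    ((((flt (Term.var 3) (tadd (Term.var 0) (Term.var 2)))) ⊓
      (flt (Term.var 0) (tadd (Term.var 3) (Term.var 2)))) ⊓
      ((((flt (Term.var 3) (Term.var 0)).not) ⊓
        (feq (tadd (tmul (tmul (Term.var 1) (Term.var 2)) (Term.var 2)) (Term.var 3))
          (tadd (Term.var 2) (Term.var 0)))) ⊔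
       (((flt (Term.var 0) (Term.var 3)).not) ⊓
        (feq (tadd (tmul (tmul (Term.var 1) (Term.var 2)) (Term.var 2)) (Term.var 0))
          (tadd (Term.var 2) (Term.var 3))))))

def C1F : LS.Formula (Fin 3) :=
  Formula.iExs (Fin 1) (Formula.relabel (![Sum.inl 0, Sum.inl 1, Sum.inl 2, Sum.inr 0] : Fin 4 → Fin 3 ⊕ Fin 1) C1u)

/-- context (x y w u) = (0 1 2 3) -/
def C2u : LS.Formula (Fin 4) :=
  (U2F.relabel ![(3 : Fin 4)]) ⊓
    ((((flt (Term.var 3) (tadd (Term.var 0) (Term.var 2)))) ⊓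
      (flt (Term.var 0) (tadd (Term.var 3) (Term.var 2)))) ⊓
      ((((flt (Term.var 3) (Term.var 0)).not) ⊓
        (feq (tadd (tadd (tmul (tmul (Term.var 1) (Term.var 2)) (Term.var 2)) (Term.var 2))
            (Term.var 0)) (Term.var 3))) ⊔
       (((flt (Term.var 0) (Term.var 3)).not) ⊓
        (feq (tadd (tadd (tmul (tmul (Term.var 1) (Term.var 2)) (Term.var 2)) (Term.var 2))
            (Term.var 3)) (Term.var 0)))))

def C2F : LS.Formula (Fin 3) :=
  Formula.iExs (Fin 1) (Formula.relabel (![Sum.inl 0, Sum.inl 1, Sum.inl 2, Sum.inr 0] : Fin 4 → Fin 3 ⊕ Fin 1) C2u)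

lemma rlz_C1F (A B : Set ℝ) (v : Fin 3 → ℝ) :
    rlz A B C1F v ↔ CS1 A (v 0) (v 1) (v 2) := by
  unfold C1F C1u CS1
  rw [rlz_iExs]
  simp only [rlz_inf, rlz_sup, rlz_not, rlz_flt, rlz_feq, rlz_relabel, rlz_U1F,
    evt_var, evt_tadd, evt_tmul, Function.comp_apply, Matrix.cons_val_zero, Matrix.cons_val_one,
    Matrix.head_cons, Matrix.cons_val_two, Matrix.tail_cons, Matrix.cons_val_three,
    Matrix.cons_val_fin_one, Sum.elim_inl, Sum.elim_inr]
  constructor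
  · rintro ⟨i, h⟩
    exact ⟨i 0, h⟩
  · rintro ⟨r, h⟩
    exact ⟨fun _ => r, h⟩

lemma rlz_C2F (A B : Set ℝ) (v : Fin 3 → ℝ) :
    rlz A B C2F v ↔ CS2 B (v 0) (v 1) (v 2) := by
  unfold C2F C2u CS2
  rw [rlz_iExs]
  simp only [rlz_inf, rlz_sup, rlz_not, rlz_flt, rlz_feq, rlz_relabel, rlz_U2F,
    evt_var, evt_tadd, evt_tmul, Function.comp_apply, Matrix.cons_val_zero, Matrix.cons_val_one,
    Matrix.head_cons, Matrix.cons_val_two, Matrix.tail_cons, Matrix.cons_val_three,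
    Matrix.cons_val_fin_one, Sum.elim_inl, Sum.elim_inr]
  constructor
  · rintro ⟨i, h⟩
    exact ⟨i 0, h⟩
  · rintro ⟨r, h⟩
    exact ⟨fun _ => r, h⟩

/-- context (x y w) = (0 1 2) -/
def PsiF : LS.Formula (Fin 3) := (WF.relabel ![(2 : Fin 3)]) ⊓ (C0F ⊔ (C1F ⊔ C2F))

/-- The defining formula ψ(x,y). -/
def psi : LS.Formula (Fin 2) :=
  Formula.iExs (Fin 1) (Formula.relabel (![Sum.inl 0, Sum.inl 1, Sum.inr 0] : Fin 3 → Fin 2 ⊕ Fin 1) PsiF)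

lemma rlz_psi (A B : Set ℝ) (x y : ℝ) :
    rlz A B psi ![x, y] ↔ PsiSem A B x y := by
  unfold psi PsiF PsiSem
  rw [rlz_iExs]
  simp only [rlz_inf, rlz_sup, rlz_relabel, rlz_WF, rlz_C0F, rlz_C1F, rlz_C2F,
    Function.comp_apply, Matrix.cons_val_zero, Matrix.cons_val_one, Matrix.head_cons,
    Matrix.cons_val_two, Matrix.tail_cons, Matrix.cons_val_fin_one, Sum.elim_inl, Sum.elim_inr]
  constructor
  · rintro ⟨i, h⟩
    exact ⟨i 0, h⟩
  · rintro ⟨r, h⟩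
    exact ⟨fun _ => r, h⟩

lemma realize_psi (A B : Set ℝ) (x y : ℝ) :
    RealizesLS A B psi x y ↔ PsiSem A B x y :=
  rlz_psi A B x y

end PWLA
end


/-- There is a first-order formula ψ(x,y) over L(S1,S2) defining, for every pair of
disjoint finite sets S1, S2 ⊆ ℝ, (the graph of) a continuous piecewise linear
function f with ∫₀¹ f = 0 iff |S1| = |S2|. -/
theorem pwl_graph_definable_card_test :
    ∃ ψ : LS.Formula (Fin 2), ∀ S1 S2 : Finset ℝ, Disjoint S1 S2 →
      ∃ f : ℝ → ℝ, IsPWL1 f ∧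
        (∀ a b : ℝ, RealizesLS (↑S1) (↑S2) ψ a b ↔ f a = b) ∧
        ((∫ x in (0:ℝ)..1, f x) = 0 ↔ S1.card = S2.card) := by
  refine ⟨PWLA.psi, fun S1 S2 hd => ⟨PWLA.ff S1 S2, PWLA.ff_pwl S1 S2,
    fun a b => (PWLA.realize_psi ↑S1 ↑S2 a b).trans (PWLA.psiSem_iff S1 S2 hd a b),
    PWLA.integral_ff_iff S1 S2⟩⟩
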